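/- Correctness of the linear-time search for the optimal index on {2,…,K}: assume K ≥ 2 and let η ≥ 0. Define k* = max( {2} ∪ {k ∈ {3,…,K} : η·γ_k > λ} ). Then Ψ_η(k*) ≤ Ψ_η(k) for all k ∈ {2,…,K}; that is, k* minimizes Ψ_η over {2,…,K}. -/
import Mathlib


open Finset

noncomputable def Gam (γ : ℕ → ℝ) (k : ℕ) : ℝ := ∑ i ∈ Finset.Icc 1 k, γ i

noncomputable def gfun (lam : ℝ) (k : ℕ) : ℝ := (if 1 < k then 1 else 0) + lam * (k : ℝ)

noncomputable def Psi (γ : ℕ → ℝ) (lam η : ℝ) (k : ℕ) : ℝ := gfun lam k - η * Gam γ k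

noncomputable def kappa (γ : ℕ → ℝ) (lam : ℝ) (K : ℕ) (η : ℝ) : ℕ :=
  sInf {k : ℕ | k ≤ K ∧ ∀ j ≤ K, Psi γ lam η k ≤ Psi γ lam η j}

noncomputable def score (γ : ℕ → ℝ) (lam : ℝ) (K : ℕ) (i : ℕ) : ℝ :=
  sInf {η : ℝ | 0 ≤ η ∧ i ≤ kappa γ lam K η}

noncomputable def ell (γ : ℕ → ℝ) (lam η : ℝ) (S : Finset ℕ) : ℝ :=
  (if 1 < S.card then 1 else 0) + lam * (S.card : ℝ) - η * ∑ i ∈ S, γ i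

noncomputable def etaSlope (γ : ℕ → ℝ) (lam : ℝ) (v : ℕ → ℕ) (i : ℕ) : ℝ :=
  (gfun lam (v i) - gfun lam (v (i - 1))) / (Gam γ (v i) - Gam γ (v (i - 1)))

lemma psi_step (γ : ℕ → ℝ) (lam η : ℝ) (k : ℕ) (hk : 2 ≤ k) :
    Psi γ lam η (k + 1) = Psi γ lam η k + (lam - η * γ (k + 1)) := by
  unfold Psi gfun Gam
  rw [Finset.sum_Icc_succ_top (by omega : 1 ≤ k + 1)]
  rw [if_pos (by omega : 1 < k + 1), if_pos (by omega : 1 < k)]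
  push_cast
  ring

/-- Correctness of the linear-time search: for K ≥ 2 and η ≥ 0,
k* = max({2} ∪ {k ∈ {3,…,K} : η·γ_k > λ}) minimizes Ψ_η over {2,…,K}. -/
theorem stmt18 (K : ℕ) (hK : 2 ≤ K) (γ : ℕ → ℝ) (lam : ℝ) (hlam : 0 ≤ lam)
    (hmono : ∀ i j : ℕ, 1 ≤ i → i ≤ j → j ≤ K → γ j ≤ γ i)
    (hposK : 0 < γ K)
    (hsum : ∑ i ∈ Finset.Icc 1 K, γ i = 1)
    (η : ℝ) (hη : 0 ≤ η) :
    ∀ k : ℕ, 2 ≤ k → k ≤ K →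
      Psi γ lam η (sSup {k : ℕ | k = 2 ∨ (3 ≤ k ∧ k ≤ K ∧ lam < η * γ k)}) ≤
      Psi γ lam η k := by
  set S : Set ℕ := {k : ℕ | k = 2 ∨ (3 ≤ k ∧ k ≤ K ∧ lam < η * γ k)} with hS
  set ks : ℕ := sSup S with hks
  have hbdd : BddAbove S := ⟨K, fun x hx => by rcases hx with h | ⟨_, h, _⟩ <;> omega⟩
  have hne : S.Nonempty := ⟨2, Or.inl rfl⟩
  have hmem : ks ∈ S := Nat.sSup_mem hne hbdd
  have hks2 : 2 ≤ ks := by rcases hmem with h | ⟨h, _, _⟩ <;> omega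
  have hksK : ks ≤ K := by rcases hmem with h | ⟨_, h, _⟩ <;> omega
  intro k hk2 hkK
  rcases le_or_gt k ks with hle | hlt
  · -- downhill: Psi ks ≤ Psi k for k ≤ ks
    have claim : ∀ m, k ≤ m → m ≤ ks → Psi γ lam η m ≤ Psi γ lam η k := by
      intro m hm
      induction m, hm using Nat.le_induction with
      | base => intro _; exact le_refl _
      | succ m hm ih =>
        intro hm1
        have hm2 : 2 ≤ m := le_trans hk2 hm
        have hks3 : 3 ≤ ks := by omega
        have hlt' : lam < η * γ (m + 1) := by
          rcases hmem with h | ⟨_, _, h⟩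
          · omega
          · calc lam < η * γ ks := h
              _ ≤ η * γ (m + 1) :=
                mul_le_mul_of_nonneg_left (hmono (m+1) ks (by omega) (by omega) hksK) hη
        rw [psi_step γ lam η m hm2]
        have := ih (by omega)
        linarith
    exact claim ks hle le_rfl
  · -- uphill: Psi ks ≤ Psi k for ks ≤ k
    have claim : ∀ m, ks ≤ m → m ≤ K → Psi γ lam η ks ≤ Psi γ lam η m := by
      intro m hm
      induction m, hm using Nat.le_induction with
      | base => intro _; exact le_refl _
      | succ m hm ih =>
        intro hm1
        have hm2 : 2 ≤ m := le_trans hks2 hm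
        have hnot : m + 1 ∉ S := fun h => by
          have := le_csSup hbdd h; omega
        have hge : η * γ (m + 1) ≤ lam := by
          by_contra hc
          exact hnot (Or.inr ⟨by omega, by omega, lt_of_not_ge hc⟩)
        rw [psi_step γ lam η m hm2]
        have := ih (by omega)
        linarith
    exact claim k hlt.le hkK
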